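/- arXiv:2205.05178 — 3 statements merged into one kernel-verified Lean document; each statement's English description precedes it below -/
import Mathlib

section
/- Let F be a finite polyforest (a directed acyclic graph whose underlying undirected graph is a forest) with vertex set V and edge set E, equipped with the Lawvere (shortest directed path) metric d, where d(u,v) = ∞ if there is no directed path from u to v. Then for every t > 0, the similarity matrix Z := exp[-t·d] has a weighting, and the magnitude of F equals |V| - |E|·e^{-t}. -/
open scoped Classical

/-- The Lawvere (shortest directed path) distance in a digraph with edge relation `R`:
the least length of a directed walk from `u` to `v`, and `∞` if there is none. -/
noncomputable def lawvereDist {V : Type*} (R : V → V → Prop) (u v : V) : ℕ∞ :=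
  sInf {n : ℕ∞ | ∃ m : ℕ, n = (m : ℕ∞) ∧ ∃ f : Fin (m + 1) → V,
    f 0 = u ∧ f (Fin.last m) = v ∧ ∀ i : Fin m, R (f i.castSucc) (f i.succ)}

/-- The similarity `e^{-t·d}`, with `e^{-t·∞} := 0`. -/
noncomputable def sim (t : ℝ) (d : ℕ∞) : ℝ :=
  if d = ⊤ then 0 else Real.exp (-t * d.toNat)

section Aux

variable {V : Type*} {R : V → V → Prop}

/-- a directed walk of length `m` from `u` to `v`, encoded as a function `ℕ → V`. -/
def IsDWalk (R : V → V → Prop) (g : ℕ → V) (m : ℕ) (u v : V) : Prop :=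
  g 0 = u ∧ g m = v ∧ ∀ i < m, R (g i) (g (i + 1))

lemma lawvereDist_eq (u v : V) :
    lawvereDist R u v
      = sInf {n : ℕ∞ | ∃ m : ℕ, n = (m : ℕ∞) ∧ ∃ g : ℕ → V, IsDWalk R g m u v} := by
  unfold lawvereDist
  congr 1
  ext n
  simp only [Set.mem_setOf_eq]
  constructor
  · rintro ⟨m, rfl, f, hf0, hfl, hstep⟩
    refine ⟨m, rfl, fun n => f ⟨min n m, by omega⟩, ?_, ?_, ?_⟩
    · convert hf0 using 2
      exact Fin.ext (by simp)
    · convert hfl using 2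
      exact Fin.ext (by simp [Fin.val_last])
    · intro i hi
      have h := hstep ⟨i, hi⟩
      convert h using 2
      · exact Fin.ext (by simp [Nat.min_eq_left (by omega : i ≤ m)])
      · exact Fin.ext (by simp [Nat.min_eq_left (by omega : i + 1 ≤ m)])
  · rintro ⟨m, rfl, g, hg0, hgm, hstep⟩
    exact ⟨m, rfl, fun i => g i.val, hg0, hgm, fun i => hstep i.val i.isLt⟩

lemma lawvereDist_le {g : ℕ → V} {m : ℕ} {u v : V} (h : IsDWalk R g m u v) :
    lawvereDist R u v ≤ (m : ℕ∞) := by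
  rw [lawvereDist_eq]
  exact sInf_le ⟨m, rfl, g, h⟩

lemma lawvereDist_self (u : V) : lawvereDist R u u = 0 := by
  have h : IsDWalk R (fun _ => u) 0 u u := ⟨rfl, rfl, fun i hi => absurd hi (Nat.not_lt_zero i)⟩
  have := lawvereDist_le h
  simpa using this

lemma IsDWalk.cut {g : ℕ → V} {m : ℕ} {x y : V} (h : IsDWalk R g m x y)
    {i j : ℕ} (hij : i < j) (hj : j ≤ m) (he : g i = g j) :
    ∃ g', IsDWalk R g' (m - (j - i)) x y := by
  refine ⟨fun n => if n ≤ i then g n else g (n + (j - i)), ?_, ?_, ?_⟩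
  · dsimp only
    simp only [Nat.zero_le, if_pos]
    exact h.1
  · dsimp only
    by_cases hc : m - (j - i) ≤ i
    · rw [if_pos hc, show m - (j - i) = i from by omega, he, show j = m from by omega]
      exact h.2.1
    · rw [if_neg hc, show m - (j - i) + (j - i) = m from by omega]
      exact h.2.1
  · intro n hn
    dsimp only
    by_cases h1 : n + 1 ≤ i
    · rw [if_pos (by omega : n ≤ i), if_pos h1]
      exact h.2.2 n (by omega)
    · by_cases h2 : n ≤ i
      · have hni : n = i := by omega
        rw [if_pos h2, if_neg h1, hni, he, show i + 1 + (j - i) = j + 1 from by omega]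
        exact h.2.2 j (by omega)
      · rw [if_neg h2, if_neg h1, show n + 1 + (j - i) = n + (j - i) + 1 from by omega]
        exact h.2.2 _ (by omega)

lemma lawvereDist_spec {u v : V} {n : ℕ} (h : lawvereDist R u v = (n : ℕ∞)) :
    ∃ g : ℕ → V, IsDWalk R g n u v ∧ ∀ i ≤ n, ∀ j ≤ n, g i = g j → i = j := by
  classical
  have hP : ∃ k : ℕ, ∃ g : ℕ → V, IsDWalk R g k u v := by
    by_contra hne
    push_neg at hne
    have htop : lawvereDist R u v = ⊤ := by
      rw [lawvereDist_eq, sInf_eq_top]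
      rintro a ⟨m, rfl, g, hg⟩
      exact absurd hg (hne m g)
    rw [htop] at h
    exact absurd h.symm (by simp)
  have hdist : lawvereDist R u v = (Nat.find hP : ℕ∞) := by
    refine le_antisymm ?_ ?_
    · obtain ⟨g, hg⟩ := Nat.find_spec hP
      exact lawvereDist_le hg
    · rw [lawvereDist_eq]
      apply le_sInf
      rintro a ⟨m, rfl, g, hg⟩
      exact_mod_cast Nat.find_min' hP ⟨g, hg⟩
  have hn : n = Nat.find hP := by
    rw [h] at hdist
    exact_mod_cast hdist
  obtain ⟨g, hg⟩ := Nat.find_spec hP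
  refine ⟨g, by rwa [← hn] at hg, ?_⟩
  have key : ∀ i j, i < j → j ≤ n → g i ≠ g j := by
    intro i j hij hj heq
    have hg' : IsDWalk R g n u v := by rwa [← hn] at hg
    obtain ⟨g', hgc⟩ := hg'.cut hij hj heq
    have hle := lawvereDist_le hgc
    rw [hdist] at hle
    have : Nat.find hP ≤ n - (j - i) := by exact_mod_cast hle
    omega
  intro i hi j hj heq
  rcases lt_trichotomy i j with hlt | heqij | hgt
  · exact absurd heq (key i j hlt hj)
  · exact heqij
  · exact absurd heq.symm (key j i hgt hi)

lemma enat_exists {d : ℕ∞} (h : d ≠ ⊤) : ∃ n : ℕ, d = (n : ℕ∞) := by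
  lift d to ℕ using h
  exact ⟨d, rfl⟩

end Aux

section Aux2

variable {V : Type*} {R : V → V → Prop}

/-- Build a `SimpleGraph.Walk` from a sequence of adjacent vertices. -/
def toWalk (G : SimpleGraph V) (g : ℕ → V) :
    (k : ℕ) → (∀ i < k, G.Adj (g i) (g (i + 1))) → G.Walk (g 0) (g k)
  | 0, _ => SimpleGraph.Walk.nil
  | (k + 1), h => (toWalk G g k fun i hi => h i (by omega)).concat (h k (by omega))

lemma toWalk_support (G : SimpleGraph V) (g : ℕ → V) :
    ∀ (k : ℕ) (h : ∀ i < k, G.Adj (g i) (g (i + 1))),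
      (toWalk G g k h).support = (List.range (k + 1)).map g
  | 0, _ => by simp [toWalk, List.range_succ]
  | (k + 1), h => by
    rw [toWalk, SimpleGraph.Walk.support_concat, toWalk_support G g k,
      List.range_succ (n := k + 1)]
    simp

lemma exists_path {g : ℕ → V} {m : ℕ} {u v : V}
    (hw : IsDWalk R g m u v) (hinj : ∀ i ≤ m, ∀ j ≤ m, g i = g j → i = j) :
    ∃ p : (SimpleGraph.fromRel R).Path u v,
      p.1.support = (List.range (m + 1)).map g := by
  obtain ⟨h0, hm, hstep⟩ := hw
  subst h0; subst hm
  have hadj : ∀ i < m, (SimpleGraph.fromRel R).Adj (g i) (g (i + 1)) := by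
    intro i hi
    rw [SimpleGraph.fromRel_adj]
    refine ⟨fun hgeq => ?_, Or.inl (hstep i hi)⟩
    have := hinj i (by omega) (i + 1) (by omega) hgeq
    omega
  refine ⟨⟨toWalk _ g m hadj, ?_⟩, toWalk_support _ _ _ _⟩
  rw [SimpleGraph.Walk.isPath_def, toWalk_support]
  refine List.Nodup.map_on ?_ List.nodup_range
  intro x hx y hy hxy
  exact hinj x (by have := List.mem_range.mp hx; omega)
    y (by have := List.mem_range.mp hy; omega) hxy

lemma dwalk_unique (hforest : (SimpleGraph.fromRel R).IsAcyclic)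
    {g g' : ℕ → V} {m m' : ℕ} {u v : V}
    (hw : IsDWalk R g m u v) (hinj : ∀ i ≤ m, ∀ j ≤ m, g i = g j → i = j)
    (hw' : IsDWalk R g' m' u v) (hinj' : ∀ i ≤ m', ∀ j ≤ m', g' i = g' j → i = j) :
    m = m' ∧ ∀ i ≤ m, g i = g' i := by
  obtain ⟨p, hp⟩ := exists_path hw hinj
  obtain ⟨p', hp'⟩ := exists_path hw' hinj'
  have hpq := hforest.path_unique p p'
  have hls : (List.range (m + 1)).map g = (List.range (m' + 1)).map g' := by
    rw [← hp, ← hp', hpq]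
  have hmm : m = m' := by
    have := congrArg List.length hls
    simpa using this
  subst hmm
  refine ⟨rfl, fun i hi => ?_⟩
  have h1 : i < ((List.range (m + 1)).map g).length := by simp; omega
  have h2 := List.getElem_of_eq hls h1
  simpa using h2

end Aux2

section Aux3

variable {V : Type*} {R : V → V → Prop}

lemma eq_of_lawvereDist_zero {u v : V} (h : lawvereDist R u v = 0) : u = v := by
  obtain ⟨g, hg, -⟩ := lawvereDist_spec (n := 0) (by exact_mod_cast h)
  rw [← hg.1, ← hg.2.1]

/-- There is no nontrivial closed directed walk in a polyforest. -/
lemma no_closed (hirr : ∀ v, ¬ R v v) (hasymm : ∀ u v, R u v → ¬ R v u)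
    (hforest : (SimpleGraph.fromRel R).IsAcyclic)
    {g : ℕ → V} {m : ℕ} {u : V} (hw : IsDWalk R g m u u) : m = 0 := by
  classical
  by_contra hm
  have hP : ∃ k : ℕ, 0 < k ∧ ∃ (x : V) (g : ℕ → V), IsDWalk R g k x x :=
    ⟨m, Nat.pos_of_ne_zero hm, u, g, hw⟩
  obtain ⟨hm0pos, x, g0, hg0⟩ := Nat.find_spec hP
  set m0 := Nat.find hP with hm0def
  -- near injectivity of the minimal closed walk
  have hni : ∀ i j, i < j → j ≤ m0 → ¬(i = 0 ∧ j = m0) → g0 i ≠ g0 j := by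
    intro i j hij hj hne heq
    obtain ⟨g', hg'⟩ := hg0.cut hij hj heq
    exact Nat.find_min hP (by omega : m0 - (j - i) < m0) ⟨by omega, x, g', hg'⟩
  have h1 : m0 ≠ 1 := by
    intro h1
    apply hirr x
    have hs := hg0.2.2 0 (by omega)
    rw [hg0.1] at hs
    rw [h1] at hg0
    rw [hg0.2.1] at hs
    exact hs
  have h2 : m0 ≠ 2 := by
    intro h2
    have hs0 := hg0.2.2 0 (by omega)
    have hs1 := hg0.2.2 1 (by omega)
    rw [hg0.1] at hs0
    have hlast : g0 2 = x := by rw [← h2]; exact hg0.2.1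
    rw [hlast] at hs1
    exact hasymm _ _ hs0 hs1
  have h3 : 3 ≤ m0 := by omega
  -- prefix path of length m0 - 1
  have hprefix : IsDWalk R g0 (m0 - 1) x (g0 (m0 - 1)) :=
    ⟨hg0.1, rfl, fun i hi => hg0.2.2 i (by omega)⟩
  have hinj : ∀ i ≤ m0 - 1, ∀ j ≤ m0 - 1, g0 i = g0 j → i = j := by
    intro i hi j hj heq
    rcases lt_trichotomy i j with hlt | heqij | hgt
    · exact absurd heq (hni i j hlt (by omega) (by omega))
    · exact heqij
    · exact absurd heq.symm (hni j i hgt (by omega) (by omega))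
  obtain ⟨p, hp⟩ := exists_path hprefix hinj
  have hne1 : x ≠ g0 (m0 - 1) := by
    rw [← hg0.1]
    exact hni 0 (m0 - 1) (by omega) (by omega) (by omega)
  have hadj : (SimpleGraph.fromRel R).Adj x (g0 (m0 - 1)) := by
    rw [SimpleGraph.fromRel_adj]
    refine ⟨hne1, Or.inr ?_⟩
    have hs := hg0.2.2 (m0 - 1) (by omega)
    rw [show m0 - 1 + 1 = m0 from by omega, hg0.2.1] at hs
    exact hs
  have hq : ((SimpleGraph.Walk.cons hadj SimpleGraph.Walk.nil :
      (SimpleGraph.fromRel R).Walk x (g0 (m0 - 1)))).IsPath := by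
    rw [SimpleGraph.Walk.isPath_def]
    simp [hne1]
  have hpq := hforest.path_unique p ⟨_, hq⟩
  have hlen := congrArg (fun q : (SimpleGraph.fromRel R).Path x (g0 (m0 - 1)) =>
    q.1.support.length) hpq
  dsimp only at hlen
  rw [hp] at hlen
  simp at hlen
  omega

/-- the target of an edge out of the end of a directed walk is not on the walk. -/
lemma fresh (hirr : ∀ v, ¬ R v v) (hasymm : ∀ u v, R u v → ¬ R v u)
    (hforest : (SimpleGraph.fromRel R).IsAcyclic)
    {u v x : V} {g : ℕ → V} {m : ℕ} (hR : R v x) (hw : IsDWalk R g m u v) :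
    ∀ i ≤ m, g i ≠ x := by
  intro i hi heq
  have hcl : IsDWalk R (fun n => if n ≤ m - i then g (n + i) else x) (m - i + 1) x x := by
    refine ⟨?_, ?_, ?_⟩
    · dsimp only
      rw [if_pos (by omega : (0:ℕ) ≤ m - i)]
      simpa using heq
    · dsimp only
      rw [if_neg (by omega)]
    · intro n hn
      dsimp only
      by_cases hc : n + 1 ≤ m - i
      · rw [if_pos (by omega : n ≤ m - i), if_pos hc]
        have hs := hw.2.2 (n + i) (by omega)
        rwa [show n + i + 1 = n + 1 + i from by omega] at hs
      · have hn' : n = m - i := by omega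
        rw [if_pos (by omega : n ≤ m - i), if_neg hc, hn',
          show m - i + i = m from by omega, hw.2.1]
        exact hR
  have := no_closed hirr hasymm hforest hcl
  omega

/-- extension of an injective directed walk by one fresh edge. -/
lemma extend_walk (hirr : ∀ v, ¬ R v v) (hasymm : ∀ u v, R u v → ¬ R v u)
    (hforest : (SimpleGraph.fromRel R).IsAcyclic)
    {u v x : V} {g : ℕ → V} {m : ℕ} (hR : R v x) (hw : IsDWalk R g m u v)
    (hinj : ∀ i ≤ m, ∀ j ≤ m, g i = g j → i = j) :
    IsDWalk R (fun n => if n ≤ m then g n else x) (m + 1) u x ∧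
      (∀ i ≤ m + 1, ∀ j ≤ m + 1, (fun n => if n ≤ m then g n else x) i
        = (fun n => if n ≤ m then g n else x) j → i = j) := by
  have hfresh := fresh hirr hasymm hforest hR hw
  constructor
  · refine ⟨?_, ?_, ?_⟩
    · dsimp only; rw [if_pos (by omega : (0:ℕ) ≤ m)]; exact hw.1
    · dsimp only; rw [if_neg (by omega)]
    · intro n hn
      dsimp only
      by_cases hc : n + 1 ≤ m
      · rw [if_pos (by omega : n ≤ m), if_pos hc]
        exact hw.2.2 n (by omega)
      · have hn' : n = m := by omega
        rw [if_pos (by omega : n ≤ m), if_neg hc, hn', hw.2.1]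
        exact hR
  · intro i hi j hj heq
    dsimp only at heq
    by_cases hci : i ≤ m <;> by_cases hcj : j ≤ m
    · rw [if_pos hci, if_pos hcj] at heq
      exact hinj i hci j hcj heq
    · rw [if_pos hci, if_neg hcj] at heq
      exact absurd heq (hfresh i hci)
    · rw [if_neg hci, if_pos hcj] at heq
      exact absurd heq.symm (hfresh j hcj)
    · omega

lemma dist_succ (hirr : ∀ v, ¬ R v v) (hasymm : ∀ u v, R u v → ¬ R v u)
    (hforest : (SimpleGraph.fromRel R).IsAcyclic)
    {u v x : V} {m : ℕ} (hR : R v x) (h : lawvereDist R u v = (m : ℕ∞)) :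
    lawvereDist R u x = ((m + 1 : ℕ) : ℕ∞) := by
  obtain ⟨g, hg, hinj⟩ := lawvereDist_spec h
  obtain ⟨hw1, hinj1⟩ := extend_walk hirr hasymm hforest hR hg hinj
  have hle : lawvereDist R u x ≤ ((m + 1 : ℕ) : ℕ∞) := lawvereDist_le hw1
  have hne : lawvereDist R u x ≠ ⊤ := fun hT => by
    rw [hT, top_le_iff] at hle
    exact ENat.coe_ne_top _ (by exact_mod_cast hle)
  obtain ⟨k, hk⟩ := enat_exists hne
  obtain ⟨g2, hg2, hinj2⟩ := lawvereDist_spec hk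
  have h5 := (dwalk_unique hforest hw1 hinj1 hg2 hinj2).1
  rw [hk, ← h5]

lemma pred_exists (hforest : (SimpleGraph.fromRel R).IsAcyclic)
    {u x : V} {n : ℕ} (hn : lawvereDist R u x = (n : ℕ∞)) (hpos : 0 < n) :
    ∃ v, R v x ∧ lawvereDist R u v = ((n - 1 : ℕ) : ℕ∞) := by
  obtain ⟨g, hg, hinj⟩ := lawvereDist_spec hn
  refine ⟨g (n - 1), ?_, ?_⟩
  · have hs := hg.2.2 (n - 1) (by omega)
    rwa [show n - 1 + 1 = n from by omega, hg.2.1] at hs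
  · have hpre : IsDWalk R g (n - 1) u (g (n - 1)) :=
      ⟨hg.1, rfl, fun i hi => hg.2.2 i (by omega)⟩
    have hinjpre : ∀ i ≤ n - 1, ∀ j ≤ n - 1, g i = g j → i = j := fun i hi j hj heq =>
      hinj i (by omega) j (by omega) heq
    have hle : lawvereDist R u (g (n - 1)) ≤ ((n - 1 : ℕ) : ℕ∞) := lawvereDist_le hpre
    have hne : lawvereDist R u (g (n - 1)) ≠ ⊤ := fun hT => by
      rw [hT, top_le_iff] at hle
      exact ENat.coe_ne_top _ (by exact_mod_cast hle)
    obtain ⟨k, hk⟩ := enat_exists hne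
    obtain ⟨g2, hg2, hinj2⟩ := lawvereDist_spec hk
    have h5 := (dwalk_unique hforest hpre hinjpre hg2 hinj2).1
    rw [hk, ← h5]

lemma pred_unique (hirr : ∀ v, ¬ R v v) (hasymm : ∀ u v, R u v → ¬ R v u)
    (hforest : (SimpleGraph.fromRel R).IsAcyclic)
    {u x v v' : V} {a b : ℕ} (h1 : R v x) (h2 : R v' x)
    (ha : lawvereDist R u v = (a : ℕ∞)) (hb : lawvereDist R u v' = (b : ℕ∞)) :
    v = v' := by
  have hda := dist_succ hirr hasymm hforest h1 ha
  have hdb := dist_succ hirr hasymm hforest h2 hb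
  have hab : a = b := by
    rw [hda] at hdb
    have : a + 1 = b + 1 := by exact_mod_cast hdb
    omega
  subst hab
  obtain ⟨g, hg, hinj⟩ := lawvereDist_spec ha
  obtain ⟨g', hg', hinj'⟩ := lawvereDist_spec hb
  obtain ⟨hw1, hinj1⟩ := extend_walk hirr hasymm hforest h1 hg hinj
  obtain ⟨hw1', hinj1'⟩ := extend_walk hirr hasymm hforest h2 hg' hinj'
  have hpt := (dwalk_unique hforest hw1 hinj1 hw1' hinj1').2 a (by omega)
  simp only [if_pos (le_refl a)] at hpt
  rw [← hg.2.1, ← hg'.2.1]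
  exact hpt

end Aux3

section Aux4

lemma sim_top (t : ℝ) : sim t ⊤ = 0 := if_pos rfl

lemma sim_zero (t : ℝ) : sim t 0 = 1 := by
  simp [sim]

lemma sim_coe (t : ℝ) (n : ℕ) : sim t (n : ℕ∞) = Real.exp (-t * n) := by
  rw [sim, if_neg (ENat.coe_ne_top _)]
  simp

lemma sim_add_one (t : ℝ) (d : ℕ∞) : sim t (d + 1) = Real.exp (-t) * sim t d := by
  by_cases hd : d = ⊤
  · subst hd
    rw [top_add, sim_top, mul_zero]
  · obtain ⟨n, hn⟩ := enat_exists hd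
    subst hn
    rw [show ((n : ℕ∞) + 1) = ((n + 1 : ℕ) : ℕ∞) from by push_cast; ring,
      sim_coe, sim_coe, ← Real.exp_add]
    congr 1
    push_cast
    ring

end Aux4

/-- A finite polyforest (an acyclic digraph whose underlying undirected graph is a forest),
with the Lawvere directed-path metric, admits a weighting at every `t > 0`, and its magnitude
equals `|V| - |E| e^{-t}`. -/
theorem polyforest_magnitude {V : Type*} [Fintype V] [DecidableEq V]
    (R : V → V → Prop)
    (hirr : ∀ v, ¬ R v v) (hasymm : ∀ u v, R u v → ¬ R v u)
    (hforest : (SimpleGraph.fromRel R).IsAcyclic)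
    (t : ℝ) (ht : 0 < t) :
    ∃ w : V → ℝ,
      (∀ u, ∑ v, sim t (lawvereDist R u v) * w v = 1) ∧
      ∑ v, w v = (Fintype.card V : ℝ) -
        ((Finset.univ.filter fun p : V × V => R p.1 p.2).card : ℝ) * Real.exp (-t) := by
  classical
  refine ⟨fun v => 1 - Real.exp (-t) * ((Finset.univ.filter fun x => R v x).card : ℝ),
    ?_, ?_⟩
  · intro u
    -- the inner sum over in-neighbours of `x`
    have hsum_in : ∀ x : V,
        ∑ v ∈ Finset.univ.filter (fun v => R v x), sim t (lawvereDist R u v + 1)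
          = if x = u then 0 else sim t (lawvereDist R u x) := by
      intro x
      by_cases hxu : x = u
      · rw [if_pos hxu]
        apply Finset.sum_eq_zero
        intro v hv
        rw [Finset.mem_filter] at hv
        by_cases hT : lawvereDist R u v = ⊤
        · rw [hT, top_add, sim_top]
        · exfalso
          obtain ⟨k, hk⟩ := enat_exists hT
          have hd := dist_succ hirr hasymm hforest hv.2 hk
          rw [hxu, lawvereDist_self] at hd
          have : (0 : ℕ) = k + 1 := by exact_mod_cast hd
          omega
      · rw [if_neg hxu]
        by_cases hT : lawvereDist R u x = ⊤
        · rw [hT, sim_top]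
          apply Finset.sum_eq_zero
          intro v hv
          rw [Finset.mem_filter] at hv
          by_cases hTv : lawvereDist R u v = ⊤
          · rw [hTv, top_add, sim_top]
          · exfalso
            obtain ⟨k, hk⟩ := enat_exists hTv
            have hd := dist_succ hirr hasymm hforest hv.2 hk
            rw [hT] at hd
            exact ENat.coe_ne_top (k + 1) hd.symm
        · obtain ⟨n, hn⟩ := enat_exists hT
          have hpos : 0 < n := by
            rcases Nat.eq_zero_or_pos n with h0 | h0
            · subst h0
              exact absurd (eq_of_lawvereDist_zero (by exact_mod_cast hn)).symm hxu
            · exact h0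
          obtain ⟨v0, hv0R, hv0d⟩ := pred_exists hforest hn hpos
          have hzero : ∀ b ∈ Finset.univ.filter (fun v => R v x), b ≠ v0 →
              sim t (lawvereDist R u b + 1) = 0 := by
            intro b hb hbne
            rw [Finset.mem_filter] at hb
            by_cases hTb : lawvereDist R u b = ⊤
            · rw [hTb, top_add, sim_top]
            · exfalso
              obtain ⟨k, hk⟩ := enat_exists hTb
              exact hbne (pred_unique hirr hasymm hforest hb.2 hv0R hk hv0d)
          have hsingle := Finset.sum_eq_single_of_mem
            (f := fun v => sim t (lawvereDist R u v + 1))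
            (s := Finset.univ.filter (fun v => R v x)) v0
            (Finset.mem_filter.mpr ⟨Finset.mem_univ _, hv0R⟩) hzero
          rw [hsingle]
          rw [hv0d, hn]
          congr 1
          rw [show ((n - 1 : ℕ) : ℕ∞) + 1 = ((n - 1 + 1 : ℕ) : ℕ∞) from by push_cast; ring,
            show n - 1 + 1 = n from by omega]
    have step1 : ∀ v : V,
        sim t (lawvereDist R u v)
            * (1 - Real.exp (-t) * ((Finset.univ.filter fun x => R v x).card : ℝ))
          = sim t (lawvereDist R u v)
            - ∑ x ∈ Finset.univ.filter (fun x => R v x), sim t (lawvereDist R u v + 1) := by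
      intro v
      rw [Finset.sum_const, nsmul_eq_mul, sim_add_one]
      ring
    have swap : ∑ v, ∑ x ∈ Finset.univ.filter (fun x => R v x), sim t (lawvereDist R u v + 1)
        = ∑ x : V, ∑ v ∈ Finset.univ.filter (fun v => R v x), sim t (lawvereDist R u v + 1) := by
      simp only [Finset.sum_filter]
      exact Finset.sum_comm
    have hDuu : sim t (lawvereDist R u u) = 1 := by
      rw [lawvereDist_self, sim_zero]
    have hitesum : ∑ x : V, (if x = u then 0 else sim t (lawvereDist R u x))
        = ∑ x : V, sim t (lawvereDist R u x) - 1 := by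
      have h1 : ∀ x : V, (if x = u then 0 else sim t (lawvereDist R u x))
          = sim t (lawvereDist R u x) - (if x = u then sim t (lawvereDist R u u) else 0) := by
        intro x
        by_cases hx : x = u
        · subst hx; simp
        · simp [hx]
      rw [Finset.sum_congr rfl fun x _ => h1 x, Finset.sum_sub_distrib,
        Finset.sum_ite_eq' Finset.univ u (fun _ => sim t (lawvereDist R u u)),
        if_pos (Finset.mem_univ u), hDuu]
    calc ∑ v, sim t (lawvereDist R u v)
          * (1 - Real.exp (-t) * ((Finset.univ.filter fun x => R v x).card : ℝ))
        = ∑ v, (sim t (lawvereDist R u v)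
            - ∑ x ∈ Finset.univ.filter (fun x => R v x), sim t (lawvereDist R u v + 1)) :=
          Finset.sum_congr rfl fun v _ => step1 v
      _ = ∑ v, sim t (lawvereDist R u v)
          - ∑ v, ∑ x ∈ Finset.univ.filter (fun x => R v x), sim t (lawvereDist R u v + 1) :=
          Finset.sum_sub_distrib _ _
      _ = ∑ v, sim t (lawvereDist R u v)
          - ∑ x : V, (if x = u then 0 else sim t (lawvereDist R u x)) := by
          rw [swap, Finset.sum_congr rfl fun x _ => hsum_in x]
      _ = 1 := by rw [hitesum]; ring
  · -- magnitude computation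
    have hedge : (Finset.univ.filter fun p : V × V => R p.1 p.2).card
        = ∑ v, (Finset.univ.filter fun x => R v x).card := by
      rw [Finset.card_filter, Fintype.sum_prod_type]
      exact Finset.sum_congr rfl fun v _ => (Finset.card_filter _ _).symm
    rw [Finset.sum_sub_distrib, Finset.sum_const, Finset.card_univ, nsmul_eq_mul, mul_one,
      ← Finset.mul_sum, hedge]
    push_cast
    ring
end

section
/- For a strong finite loopless digraph D with basepoint v₀ and any t ∈ (0, ∞], lim_{L→∞} L^{-1} log Mag(B_{v₀}(L), t) ≤ h(D), where h(D) := lim_{L→∞} L^{-1} log |V(B_{v₀}(L))| is the topological entropy, with equality when t = ∞; moreover the limit on the left is independent of the basepoint v₀. -/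
open Filter

section AuxBall

lemma aux_comp_div {g : ℕ → ℝ} {c : ℝ}
    (h : Tendsto (fun L : ℕ => g L / L) atTop (nhds c))
    (φ : ℕ → ℕ) (hφ : Tendsto φ atTop atTop)
    (hφ1 : Tendsto (fun L : ℕ => (φ L : ℝ) / L) atTop (nhds 1)) :
    Tendsto (fun L : ℕ => g (φ L) / L) atTop (nhds c) := by
  have h1 : Tendsto (fun L : ℕ => g (φ L) / (φ L : ℝ)) atTop (nhds c) := h.comp hφ
  have h2 := h1.mul hφ1
  rw [mul_one] at h2
  refine h2.congr' ?_
  filter_upwards [hφ.eventually_ge_atTop 1, eventually_ge_atTop 1] with L hL hL'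
  have h0 : (φ L : ℝ) ≠ 0 := by
    have : (0:ℝ) < φ L := by exact_mod_cast hL
    linarith
  have hL0 : (L : ℝ) ≠ 0 := by
    have : (0:ℝ) < L := by exact_mod_cast hL'
    linarith
  field_simp

lemma aux_add_div {g : ℕ → ℝ} {c : ℝ}
    (h : Tendsto (fun L : ℕ => g L / L) atTop (nhds c)) (d : ℕ) :
    Tendsto (fun L : ℕ => g (L + d) / L) atTop (nhds c) := by
  refine aux_comp_div h (fun L => L + d) (tendsto_add_atTop_nat d) ?_
  have h1 : Tendsto (fun L : ℕ => 1 + (d : ℝ) / L) atTop (nhds (1 + 0)) :=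
    tendsto_const_nhds.add (tendsto_const_div_atTop_nhds_zero_nat (d : ℝ))
  rw [add_zero] at h1
  refine h1.congr' ?_
  filter_upwards [eventually_ge_atTop 1] with L hL
  have hL0 : (L : ℝ) ≠ 0 := by
    have : (0:ℝ) < L := by exact_mod_cast hL
    linarith
  push_cast
  field_simp

lemma aux_sub_div {g : ℕ → ℝ} {c : ℝ}
    (h : Tendsto (fun L : ℕ => g L / L) atTop (nhds c)) (d : ℕ) :
    Tendsto (fun L : ℕ => g (L - d) / L) atTop (nhds c) := by
  refine aux_comp_div h (fun L => L - d) (tendsto_sub_atTop_nat d) ?_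
  have h1 : Tendsto (fun L : ℕ => 1 - (d : ℝ) / L) atTop (nhds (1 - 0)) :=
    tendsto_const_nhds.sub (tendsto_const_div_atTop_nhds_zero_nat (d : ℝ))
  rw [sub_zero] at h1
  refine h1.congr' ?_
  filter_upwards [eventually_ge_atTop (d + 1)] with L hL
  have hL0 : (L : ℝ) ≠ 0 := by
    have : (0:ℝ) < L := by exact_mod_cast (Nat.lt_of_lt_of_le (Nat.succ_pos d) hL)
    linarith
  rw [Nat.cast_sub (by omega)]
  field_simp

variable {V : Type*} [Fintype V] [DecidableEq V]

lemma aux_pow_nonneg (A : Matrix V V ℝ) (h0 : ∀ u v, 0 ≤ A u v) :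
    ∀ (ℓ : ℕ) (u v : V), 0 ≤ (A ^ ℓ) u v := by
  intro ℓ
  induction ℓ with
  | zero => intro u v; simp [Matrix.one_apply]; split <;> norm_num
  | succ n ih =>
    intro u v
    rw [pow_succ, Matrix.mul_apply]
    exact Finset.sum_nonneg fun j _ => mul_nonneg (ih u j) (h0 j v)

lemma aux_reach (R : V → V → Prop) [DecidableRel R]
    (A : Matrix V V ℝ) (hA : A = fun u v => if R u v then 1 else 0)
    {u v : V} (h : Relation.ReflTransGen R u v) :
    ∃ d : ℕ, 1 ≤ (A ^ d) u v := by
  have h0 : ∀ u v, 0 ≤ A u v := by intro a b; rw [hA]; dsimp; split <;> norm_num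
  induction h with
  | refl => exact ⟨0, by simp [Matrix.one_apply]⟩
  | tail hab hbc ih =>
    rename_i b c
    obtain ⟨d, hd⟩ := ih
    refine ⟨d + 1, ?_⟩
    rw [pow_succ, Matrix.mul_apply]
    have hAbc : A b c = 1 := by rw [hA]; simp [hbc]
    calc (1:ℝ) = 1 * 1 := (one_mul 1).symm
      _ ≤ (A ^ d) u b * A b c := by rw [hAbc]; exact mul_le_mul_of_nonneg_right hd one_pos.le
      _ ≤ ∑ j, (A ^ d) u j * A j c := Finset.single_le_sum
          (fun j _ => mul_nonneg (aux_pow_nonneg A h0 d u j) (h0 j c)) (Finset.mem_univ b)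

end AuxBall

/-- For a strong finite loopless digraph `D` with basepoint `v₀`, writing
`N v L = Σ_{ℓ=0}^{L} Σ_k (A^ℓ)_{v k}` for the vertex count of the ball `B_v(L)` in the universal
cover and `h(D)` for the limit of `L⁻¹ log N(v₀,L)` (the topological entropy), we have for any
`t ∈ (0,∞]` that `lim_L L⁻¹ log Mag(B_{v₀}(L),t) ≤ h(D)`, with equality at `t = ∞` (where
`Mag(·,∞) = N`); moreover the limit is independent of the basepoint. -/
theorem ball_magnitude_growth_le_entropy {V : Type*} [Fintype V] [DecidableEq V]
    (R : V → V → Prop) [DecidableRel R]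
    (hirr : ∀ v, ¬ R v v) (hstrong : ∀ u v : V, Relation.ReflTransGen R u v)
    (A : Matrix V V ℝ) (hA : A = fun u v => if R u v then 1 else 0)
    (v₀ : V) (N : V → ℕ → ℝ)
    (hN : ∀ v L, N v L = ∑ ℓ ∈ Finset.range (L + 1), ∑ k, (A ^ ℓ) v k)
    (hD : ℝ)
    (hlim : Tendsto (fun L : ℕ => Real.log (N v₀ L) / L) atTop (nhds hD)) :
    (∀ t : ℝ, 0 < t → ∃ c : ℝ, c ≤ hD ∧ ∀ v : V,
      Tendsto (fun L : ℕ => Real.log (N v L - (N v L - 1) * Real.exp (-t)) / L)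
        atTop (nhds c)) ∧
    (∀ v : V, Tendsto (fun L : ℕ => Real.log (N v L) / L) atTop (nhds hD)) := by
  have h0 : ∀ u v, 0 ≤ A u v := by intro a b; rw [hA]; dsimp; split <;> norm_num
  have hpow := aux_pow_nonneg A h0
  -- N v L ≥ 1
  have hN1 : ∀ v L, (1:ℝ) ≤ N v L := by
    intro v L
    rw [hN]
    calc (1:ℝ) = ∑ k, (A ^ 0) v k := by simp [Matrix.one_apply]
      _ ≤ ∑ ℓ ∈ Finset.range (L + 1), ∑ k, (A ^ ℓ) v k :=
        Finset.single_le_sum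
          (fun ℓ _ => Finset.sum_nonneg fun k _ => hpow ℓ v k)
          (Finset.mem_range.2 (Nat.succ_pos L))
  have hNpos : ∀ v L, (0:ℝ) < N v L := fun v L => lt_of_lt_of_le one_pos (hN1 v L)
  -- key shift inequality
  have hshift : ∀ (u w : V) (d : ℕ), 1 ≤ (A ^ d) u w → ∀ L, N w L ≤ N u (L + d) := by
    intro u w d hd L
    rw [hN, hN]
    have step1 : ∀ ℓ k, (A ^ ℓ) w k ≤ (A ^ (d + ℓ)) u k := by
      intro ℓ k
      rw [pow_add, Matrix.mul_apply]
      calc (A ^ ℓ) w k ≤ (A ^ d) u w * (A ^ ℓ) w k :=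
            le_mul_of_one_le_left (hpow ℓ w k) hd
        _ ≤ ∑ j, (A ^ d) u j * (A ^ ℓ) j k :=
            Finset.single_le_sum
              (fun j _ => mul_nonneg (hpow d u j) (hpow ℓ j k)) (Finset.mem_univ w)
    calc ∑ ℓ ∈ Finset.range (L + 1), ∑ k, (A ^ ℓ) w k
        ≤ ∑ ℓ ∈ Finset.range (L + 1), ∑ k, (A ^ (d + ℓ)) u k :=
          Finset.sum_le_sum fun ℓ _ => Finset.sum_le_sum fun k _ => step1 ℓ k
      _ = ∑ ℓ ∈ Finset.Ico d (d + (L + 1)), ∑ k, (A ^ ℓ) u k := by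
          rw [Finset.sum_Ico_eq_sum_range]
          simp
      _ ≤ ∑ ℓ ∈ Finset.range (L + d + 1), ∑ k, (A ^ ℓ) u k := by
          apply Finset.sum_le_sum_of_subset_of_nonneg
          · intro x hx
            rw [Finset.mem_Ico] at hx
            rw [Finset.mem_range]
            omega
          · intro x _ _
            exact Finset.sum_nonneg fun k _ => hpow x u k
  -- the limit for every basepoint
  have key : ∀ v : V, Tendsto (fun L : ℕ => Real.log (N v L) / L) atTop (nhds hD) := by
    intro v
    obtain ⟨d, hd⟩ := aux_reach R A hA (hstrong v v₀)
    obtain ⟨d', hd'⟩ := aux_reach R A hA (hstrong v₀ v)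
    have hlow : Tendsto (fun L : ℕ => Real.log (N v₀ (L - d)) / L) atTop (nhds hD) :=
      aux_sub_div hlim d
    have hhigh : Tendsto (fun L : ℕ => Real.log (N v₀ (L + d')) / L) atTop (nhds hD) :=
      aux_add_div hlim d'
    refine tendsto_of_tendsto_of_tendsto_of_le_of_le' hlow hhigh ?_ ?_
    · filter_upwards [eventually_ge_atTop (d + 1)] with L hL
      have hle : N v₀ (L - d) ≤ N v L := by
        have := hshift v v₀ d hd (L - d)
        rwa [Nat.sub_add_cancel (by omega)] at this
      have hLpos : (0:ℝ) < L := by exact_mod_cast Nat.lt_of_lt_of_le (Nat.succ_pos d) hL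
      gcongr
      exact hNpos v₀ (L - d)
    · filter_upwards [eventually_ge_atTop 1] with L hL
      have hle : N v L ≤ N v₀ (L + d') := hshift v₀ v d' hd' L
      have hLpos : (0:ℝ) < L := by exact_mod_cast hL
      gcongr
      exact hNpos v L
  refine ⟨fun t ht => ⟨hD, le_refl hD, fun v => ?_⟩, key⟩
  -- magnitude part
  set e : ℝ := Real.exp (-t) with he
  have he0 : 0 < e := Real.exp_pos _
  have he1 : e < 1 := by
    rw [he]
    exact Real.exp_lt_one_iff.2 (by linarith)
  have ha : 0 < 1 - e := by linarith
  have hlow : Tendsto (fun L : ℕ => (Real.log (1 - e) + Real.log (N v L)) / L)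
      atTop (nhds hD) := by
    have h1 : Tendsto (fun L : ℕ => Real.log (1 - e) / L + Real.log (N v L) / L)
        atTop (nhds (0 + hD)) :=
      (tendsto_const_div_atTop_nhds_zero_nat _).add (key v)
    rw [zero_add] at h1
    exact h1.congr fun L => (add_div _ _ _).symm
  refine tendsto_of_tendsto_of_tendsto_of_le_of_le' hlow (key v) ?_ ?_
  · filter_upwards [eventually_ge_atTop 1] with L hL
    have hLpos : (0:ℝ) < L := by exact_mod_cast hL
    have hMag : (1 - e) * N v L ≤ N v L - (N v L - 1) * e := by nlinarith [hN1 v L]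
    have hlogeq : Real.log (1 - e) + Real.log (N v L) = Real.log ((1 - e) * N v L) :=
      (Real.log_mul (ne_of_gt ha) (ne_of_gt (hNpos v L))).symm
    rw [hlogeq]
    gcongr
    exact mul_pos ha (hNpos v L)
  · filter_upwards [eventually_ge_atTop 1] with L hL
    have hLpos : (0:ℝ) < L := by exact_mod_cast hL
    have hMag : N v L - (N v L - 1) * e ≤ N v L := by nlinarith [hN1 v L]
    have hMagpos : 0 < N v L - (N v L - 1) * e := by nlinarith [hN1 v L]
    gcongr
end

section
/- Let F be a finite polyforest with c connected components (polytrees), vertex set V and edge set E. Then the magnitude of F with respect to the Lawvere directed-path metric at parameter t satisfies Mag(F, t) = c + |E|(1 - e^{-t}), which equals |V| - |E| e^{-t}. -/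
open scoped Classical
set_option maxHeartbeats 1000000

namespace PolyForest

variable {V : Type*} {R : V → V → Prop}

/-- A directed walk predicate. -/
def DWalk (R : V → V → Prop) (m : ℕ) (f : Fin (m + 1) → V) (u v : V) : Prop :=
  f 0 = u ∧ f (Fin.last m) = v ∧ ∀ i : Fin m, R (f i.castSucc) (f i.succ)

lemma dist_le_of_dwalk {m : ℕ} {f : Fin (m+1) → V} {u v : V} (h : DWalk R m f u v) :
    lawvereDist R u v ≤ (m : ℕ∞) :=
  sInf_le ⟨m, rfl, f, h.1, h.2.1, h.2.2⟩

lemma dwalk_adj {m : ℕ} {f : Fin (m+1) → V} {u v : V} (h : DWalk R m f u v)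
    {a b : ℕ} (ha : a < m + 1) (hb : b < m + 1) (hab : b = a + 1) :
    R (f ⟨a, ha⟩) (f ⟨b, hb⟩) := by
  subst hab
  exact h.2.2 ⟨a, by omega⟩

lemma lawvereDist_self (u : V) : lawvereDist R u u = 0 := by
  refine le_antisymm ?_ bot_le
  have : ((0:ℕ) : ℕ∞) = 0 := rfl
  rw [← this]
  exact dist_le_of_dwalk (m := 0) (f := fun _ => u) ⟨rfl, rfl, fun i => i.elim0⟩

lemma exists_dwalk_of_dist {u v : V} {n : ℕ} (h : lawvereDist R u v = (n : ℕ∞)) :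
    ∃ f : Fin (n+1) → V, DWalk R n f u v := by
  classical
  set S := {n : ℕ∞ | ∃ m : ℕ, n = (m : ℕ∞) ∧ ∃ f : Fin (m + 1) → V,
    f 0 = u ∧ f (Fin.last m) = v ∧ ∀ i : Fin m, R (f i.castSucc) (f i.succ)} with hS
  set T := {m : ℕ | ∃ f : Fin (m + 1) → V, DWalk R m f u v} with hT
  have hTne : T.Nonempty := by
    by_contra hc
    have hSe : S = ∅ := by
      ext x
      simp only [Set.mem_empty_iff_false, iff_false, hS, Set.mem_setOf_eq]
      rintro ⟨m, rfl, f, h1, h2, h3⟩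
      exact hc ⟨m, f, h1, h2, h3⟩
    have : lawvereDist R u v = ⊤ := by
      rw [lawvereDist, ← hS, hSe, sInf_empty]
    rw [h] at this
    exact (WithTop.natCast_ne_top n) this
  have hmem : sInf T ∈ T := Nat.sInf_mem hTne
  have hval : lawvereDist R u v = ((sInf T : ℕ) : ℕ∞) := by
    rw [lawvereDist, ← hS]
    refine le_antisymm (sInf_le ?_) (le_sInf ?_)
    · obtain ⟨f, h1, h2, h3⟩ := hmem
      exact ⟨sInf T, rfl, f, h1, h2, h3⟩
    · rintro b ⟨m, rfl, f, h1, h2, h3⟩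
      exact_mod_cast Nat.sInf_le (⟨f, h1, h2, h3⟩ : m ∈ T)
  rw [h] at hval
  have : n = sInf T := by exact_mod_cast hval
  rw [this]
  exact hmem

/-- From any directed walk one can extract an injective one (of no greater length). -/
lemma exists_inj_dwalk : ∀ m : ℕ, ∀ (u v : V) (f : Fin (m+1) → V), DWalk R m f u v →
    ∃ m' ≤ m, ∃ g : Fin (m'+1) → V, DWalk R m' g u v ∧ Function.Injective g := by
  intro m
  induction m using Nat.strong_induction_on with
  | _ m IH =>
    intro u v f hf
    by_cases hinj : Function.Injective f
    · exact ⟨m, le_rfl, f, hf, hinj⟩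
    · simp only [Function.Injective] at hinj
      push_neg at hinj
      obtain ⟨i, j, hij, hne⟩ := hinj
      -- wlog i < j
      obtain ⟨i, j, hij, hlt⟩ : ∃ i j : Fin (m+1), f i = f j ∧ i < j := by
        rcases lt_or_gt_of_ne hne with h | h
        · exact ⟨i, j, hij, h⟩
        · exact ⟨j, i, hij.symm, h⟩
      have hlt' : i.val < j.val := hlt
      have hjm : j.val ≤ m := by omega
      set d : ℕ := j.val - i.val with hd
      have hd1 : 1 ≤ d := by omega
      set m' : ℕ := m - d with hm'
      have him : i.val ≤ m' := by omega
      set g : Fin (m'+1) → V := fun k =>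
        f ⟨if k.val ≤ i.val then k.val else k.val + d, by split <;> omega⟩ with hg
      have gf : ∀ (k : Fin (m'+1)) (a : ℕ) (ha : a < m + 1),
          (if k.val ≤ i.val then k.val else k.val + d) = a → g k = f ⟨a, ha⟩ := by
        intro k a ha h
        simp only [hg]
        exact congrArg f (Fin.ext h)
      have hgw : DWalk R m' g u v := by
        refine ⟨?_, ?_, ?_⟩
        · rw [gf 0 0 (by omega) (by simp)]
          have : (⟨0, by omega⟩ : Fin (m+1)) = 0 := rfl
          rw [this]; exact hf.1
        · by_cases hc : m' ≤ i.val
          · have hieq : i.val = m' := by omega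
            have hjl : j.val = m := by omega
            rw [gf (Fin.last m') i.val (by omega) (by rw [Fin.val_last, if_pos hc]; omega)]
            have h1 : (⟨i.val, by omega⟩ : Fin (m+1)) = i := Fin.ext rfl
            rw [h1, hij]
            have h2 : j = Fin.last m := Fin.ext (by simp [Fin.val_last, hjl])
            rw [h2]; exact hf.2.1
          · rw [gf (Fin.last m') m (by omega) (by rw [Fin.val_last, if_neg hc]; omega)]
            have : (⟨m, by omega⟩ : Fin (m+1)) = Fin.last m := Fin.ext rfl
            rw [this]; exact hf.2.1
        · intro k
          have hk1 : k.castSucc.val = k.val := rfl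
          have hk2 : k.succ.val = k.val + 1 := rfl
          have hkm : k.val < m' := k.isLt
          rcases lt_trichotomy k.val i.val with hc | hc | hc
          · rw [gf k.castSucc k.val (by omega) (by rw [hk1, if_pos (by omega)]),
              gf k.succ (k.val + 1) (by omega) (by rw [hk2, if_pos (by omega)])]
            exact dwalk_adj hf _ _ rfl
          · rw [gf k.castSucc i.val (by omega) (by rw [hk1, if_pos (by omega)]; omega),
              gf k.succ (j.val + 1) (by omega) (by rw [hk2, if_neg (by omega)]; omega)]
            have h1 : (⟨i.val, by omega⟩ : Fin (m+1)) = i := Fin.ext rfl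
            rw [h1, hij]
            have h4 : R (f ⟨j.val, by omega⟩) (f ⟨j.val + 1, by omega⟩) :=
              dwalk_adj hf _ _ rfl
            have h5 : (⟨j.val, by omega⟩ : Fin (m+1)) = j := Fin.ext rfl
            rwa [h5] at h4
          · rw [gf k.castSucc (k.val + d) (by omega) (by rw [hk1, if_neg (by omega)]),
              gf k.succ (k.val + 1 + d) (by omega) (by rw [hk2, if_neg (by omega)])]
            exact dwalk_adj hf _ _ (by omega)
      have hmm : m' < m := by omega
      obtain ⟨m'', hle, g', hg', hinj'⟩ := IH m' hmm u v g hgw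
      exact ⟨m'', by omega, g', hg', hinj'⟩

/-- Suffix of a directed walk. -/
lemma dwalk_suffix {m : ℕ} {f : Fin (m+1) → V} {u v : V} (h : DWalk R m f u v)
    (i : Fin (m+1)) :
    ∃ g : Fin (m - i.val + 1) → V, DWalk R (m - i.val) g (f i) v := by
  refine ⟨fun k => f ⟨i.val + k.val, by omega⟩, ?_, ?_, ?_⟩
  · exact congrArg f (Fin.ext (by simp))
  · rw [← h.2.1]
    exact congrArg f (Fin.ext (by simp [Fin.val_last]; omega))
  · intro k
    exact dwalk_adj h _ _ (by simp [Fin.val_succ]; omega)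

/-- Prefix of a directed walk. -/
lemma dwalk_prefix {m : ℕ} {f : Fin (m+1) → V} {u v : V} (h : DWalk R m f u v)
    (i : Fin (m+1)) :
    ∃ g : Fin (i.val + 1) → V, DWalk R i.val g u (f i) := by
  refine ⟨fun k => f ⟨k.val, by omega⟩, ?_, ?_, ?_⟩
  · rw [← h.1]; exact congrArg f (Fin.ext (by simp))
  · exact congrArg f (Fin.ext (by simp [Fin.val_last]))
  · intro k
    exact dwalk_adj h _ _ rfl

/-- Convert a `Fin`-indexed adjacency walk into a `SimpleGraph.Walk`. -/
lemma exists_walk_ofFn {G : SimpleGraph V} :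
    ∀ (m : ℕ) (f : Fin (m+1) → V), (∀ i : Fin m, G.Adj (f i.castSucc) (f i.succ)) →
    ∃ p : G.Walk (f 0) (f (Fin.last m)), p.support = List.ofFn f := by
  intro m
  induction m with
  | zero =>
    intro f _
    have h0 : Fin.last 0 = 0 := rfl
    refine ⟨(SimpleGraph.Walk.nil : G.Walk (f 0) (f 0)).copy rfl (by rw [h0]), ?_⟩
    simp [List.ofFn_succ]
  | succ m IH =>
    intro f hf
    obtain ⟨p, hp⟩ := IH (fun i => f i.succ) (fun i => by
      have := hf i.succ
      rwa [← Fin.succ_castSucc] at this)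
    have h0 : G.Adj (f 0) (f ((0 : Fin (m+1)).succ)) := by
      have := hf 0
      rwa [Fin.castSucc_zero] at this
    refine ⟨(SimpleGraph.Walk.cons h0 p).copy rfl (by rw [Fin.succ_last]), ?_⟩
    conv_rhs => rw [List.ofFn_succ]
    rw [SimpleGraph.Walk.support_copy, SimpleGraph.Walk.support_cons, hp]



open SimpleGraph in
lemma toPath {m : ℕ} {f : Fin (m+1) → V} {u v : V} (h : DWalk R m f u v)
    (hinj : Function.Injective f) :
    ∃ p : (SimpleGraph.fromRel R).Walk u v, p.IsPath ∧ p.support = List.ofFn f := by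
  have hadj : ∀ i : Fin m, (fromRel R).Adj (f i.castSucc) (f i.succ) := fun i => by
    rw [SimpleGraph.fromRel_adj]
    refine ⟨fun hc => ?_, Or.inl (h.2.2 i)⟩
    have := hinj hc
    exact absurd this (Fin.castSucc_lt_succ (i := i)).ne
  obtain ⟨p, hp⟩ := exists_walk_ofFn m f hadj
  refine ⟨p.copy h.1 h.2.1, ?_, ?_⟩
  · rw [SimpleGraph.Walk.isPath_copy, SimpleGraph.Walk.isPath_def, hp]
    exact List.nodup_ofFn.2 hinj
  · rw [SimpleGraph.Walk.support_copy, hp]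

lemma exists_inj_dwalk_of_dist {u v : V} {n : ℕ} (h : lawvereDist R u v = (n : ℕ∞)) :
    ∃ f : Fin (n+1) → V, DWalk R n f u v ∧ Function.Injective f := by
  obtain ⟨f, hf⟩ := exists_dwalk_of_dist h
  obtain ⟨m', hm', g, hg, hinj⟩ := exists_inj_dwalk n u v f hf
  have h1 : (n : ℕ∞) ≤ (m' : ℕ∞) := h ▸ dist_le_of_dwalk hg
  have hm : m' = n := le_antisymm hm' (by exact_mod_cast h1)
  subst hm
  exact ⟨g, hg, hinj⟩

lemma dist_ne_top_exists {u v : V} (h : lawvereDist R u v ≠ ⊤) :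
    ∃ n : ℕ, lawvereDist R u v = (n : ℕ∞) := by
  obtain ⟨n, hn⟩ := WithTop.ne_top_iff_exists.1 h
  exact ⟨n, hn.symm⟩

lemma eq_of_dist_zero {u v : V} (h : lawvereDist R u v = ((0:ℕ) : ℕ∞)) : u = v := by
  obtain ⟨f, hf⟩ := exists_dwalk_of_dist h
  have h0 : Fin.last 0 = 0 := rfl
  rw [← hf.1, ← hf.2.1, h0]

section Forest
variable (hirr : ∀ v, ¬ R v v) (hasymm : ∀ u v, R u v → ¬ R v u)
  (hforest : (SimpleGraph.fromRel R).IsAcyclic)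
include hirr hasymm hforest

lemma noback {a b : V} (hd : lawvereDist R a b ≠ ⊤) (hr : R b a) : False := by
  obtain ⟨n, hn⟩ := dist_ne_top_exists hd
  obtain ⟨f, hf, hinj⟩ := exists_inj_dwalk_of_dist hn
  cases n with
  | zero =>
    have : a = b := by
      have h0 : Fin.last 0 = 0 := rfl
      rw [← hf.1, ← hf.2.1, h0]
    exact hirr a (this ▸ hr)
  | succ n =>
    have hab : a ≠ b := by
      rw [← hf.1, ← hf.2.1]
      intro hc
      have := hinj hc
      exact absurd (congrArg Fin.val this) (by simp)
    obtain ⟨p, hp, hps⟩ := toPath hf hinj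
    have hadj : (SimpleGraph.fromRel R).Adj a b := by
      rw [SimpleGraph.fromRel_adj]
      exact ⟨hab, Or.inr hr⟩
    set q : (SimpleGraph.fromRel R).Walk a b := SimpleGraph.Walk.cons hadj SimpleGraph.Walk.nil
      with hqdef
    have hq : q.IsPath := by
      rw [SimpleGraph.Walk.isPath_def, hqdef]
      simp [hab]
    have hpq : p = q := by
      have := hforest.path_unique ⟨p, hp⟩ ⟨q, hq⟩
      exact congrArg Subtype.val this
    have hlen : (List.ofFn f).length = 2 := by
      rw [← hps, hpq, hqdef]
      simp
    rw [List.length_ofFn] at hlen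
    have hn1 : n = 0 := by omega
    subst hn1
    have h1 : R a (f (Fin.last 1)) := by
      rw [← hf.1]
      have := hf.2.2 0
      have e1 : Fin.succ (0 : Fin 1) = Fin.last 1 := rfl
      rwa [Fin.castSucc_zero, e1] at this
    rw [hf.2.1] at h1
    exact hasymm _ _ h1 hr

lemma exists_ext_dwalk {u v w : V} {n : ℕ} (hd : lawvereDist R u v = (n : ℕ∞)) (hr : R v w) :
    ∃ h : Fin (n+2) → V, DWalk R (n+1) h u w ∧ Function.Injective h ∧
      h (Fin.castSucc (Fin.last n)) = v := by
  obtain ⟨f, hf, hinj⟩ := exists_inj_dwalk_of_dist hd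
  have hwr : ∀ i : Fin (n+1), f i ≠ w := by
    intro i hi
    obtain ⟨g, hg⟩ := dwalk_suffix hf i
    rw [hi] at hg
    have hle : lawvereDist R w v ≤ ((n - i.val : ℕ) : ℕ∞) := dist_le_of_dwalk hg
    have hne : lawvereDist R w v ≠ ⊤ := by
      intro hc
      rw [hc] at hle
      exact (WithTop.natCast_ne_top _) (top_le_iff.1 hle)
    exact noback hirr hasymm hforest hne hr
  refine ⟨Fin.snoc f w, ⟨?_, Fin.snoc_last _ _, ?_⟩, ?_, by rw [Fin.snoc_castSucc]; exact hf.2.1⟩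
  · have e0 : (0 : Fin (n+2)) = Fin.castSucc 0 := rfl
    rw [e0, Fin.snoc_castSucc]
    exact hf.1
  · intro i
    by_cases hil : i = Fin.last n
    · subst hil
      rw [Fin.succ_last, Fin.snoc_last, Fin.snoc_castSucc, hf.2.1]
      exact hr
    · have hlt : i.val < n := by
        have := Fin.val_lt_last hil
        omega
      have e1 : i.succ = Fin.castSucc ⟨i.val + 1, by omega⟩ := Fin.ext rfl
      have e2 : i.castSucc = Fin.castSucc ⟨i.val, by omega⟩ := Fin.ext rfl
      rw [e1, e2, Fin.snoc_castSucc, Fin.snoc_castSucc]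
      exact dwalk_adj hf _ _ rfl
  · intro x y hxy
    rcases Fin.eq_castSucc_or_eq_last x with ⟨x', rfl⟩ | rfl <;>
      rcases Fin.eq_castSucc_or_eq_last y with ⟨y', rfl⟩ | rfl
    · rw [Fin.snoc_castSucc, Fin.snoc_castSucc] at hxy
      exact congrArg _ (hinj hxy)
    · rw [Fin.snoc_castSucc, Fin.snoc_last] at hxy
      exact absurd hxy (hwr x')
    · rw [Fin.snoc_last, Fin.snoc_castSucc] at hxy
      exact absurd hxy.symm (hwr y')
    · rfl

lemma dist_step {u v w : V} {n : ℕ} (hd : lawvereDist R u v = (n : ℕ∞)) (hr : R v w) :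
    lawvereDist R u w = ((n + 1 : ℕ) : ℕ∞) := by
  obtain ⟨h, hh, hinjh, _⟩ := exists_ext_dwalk hirr hasymm hforest hd hr
  have hle : lawvereDist R u w ≤ ((n + 1 : ℕ) : ℕ∞) := dist_le_of_dwalk hh
  have hne : lawvereDist R u w ≠ ⊤ := by
    intro hc
    rw [hc] at hle
    exact (WithTop.natCast_ne_top _) (top_le_iff.1 hle)
  obtain ⟨k, hk⟩ := dist_ne_top_exists hne
  obtain ⟨g, hg, hinjg⟩ := exists_inj_dwalk_of_dist hk
  obtain ⟨p, hp, hps⟩ := toPath hh hinjh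
  obtain ⟨q, hq, hqs⟩ := toPath hg hinjg
  have hpq : p = q := congrArg Subtype.val (hforest.path_unique ⟨p, hp⟩ ⟨q, hq⟩)
  have hlen : (List.ofFn h).length = (List.ofFn g).length := by rw [← hps, ← hqs, hpq]
  rw [List.length_ofFn, List.length_ofFn] at hlen
  have : k = n + 1 := by omega
  rw [hk, this]

lemma parent_unique {u w v₁ v₂ : V} (h1 : R v₁ w) (h2 : R v₂ w)
    (hd1 : lawvereDist R u v₁ ≠ ⊤) (hd2 : lawvereDist R u v₂ ≠ ⊤) : v₁ = v₂ := by
  obtain ⟨n₁, hn1⟩ := dist_ne_top_exists hd1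
  obtain ⟨n₂, hn2⟩ := dist_ne_top_exists hd2
  have e1 := dist_step hirr hasymm hforest hn1 h1
  have e2 := dist_step hirr hasymm hforest hn2 h2
  have hnn : n₁ = n₂ := by
    have h3 : n₁ + 1 = n₂ + 1 := by exact_mod_cast e1.symm.trans e2
    omega
  subst hnn
  obtain ⟨h₁, hh1, hinj1, hp1⟩ := exists_ext_dwalk hirr hasymm hforest hn1 h1
  obtain ⟨h₂, hh2, hinj2, hp2⟩ := exists_ext_dwalk hirr hasymm hforest hn2 h2
  obtain ⟨p, hp, hps⟩ := toPath hh1 hinj1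
  obtain ⟨q, hq, hqs⟩ := toPath hh2 hinj2
  have hpq : p = q := congrArg Subtype.val (hforest.path_unique ⟨p, hp⟩ ⟨q, hq⟩)
  have hof : List.ofFn h₁ = List.ofFn h₂ := by rw [← hps, ← hqs, hpq]
  have hfe : h₁ = h₂ := List.ofFn_inj.1 hof
  rw [← hp1, ← hp2, hfe]

lemma parent_exists {u w : V} {k : ℕ} (hne : w ≠ u) (hd : lawvereDist R u w = (k : ℕ∞)) :
    ∃ v, R v w ∧ lawvereDist R u v ≠ ⊤ := by
  cases k with
  | zero => exact absurd (eq_of_dist_zero hd).symm hne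
  | succ k =>
    obtain ⟨f, hf⟩ := exists_dwalk_of_dist hd
    refine ⟨f (Fin.castSucc (Fin.last k)), ?_, ?_⟩
    · have h1 : R (f ⟨k, by omega⟩) (f ⟨k+1, by omega⟩) := dwalk_adj hf _ _ rfl
      have e1 : (⟨k, by omega⟩ : Fin (k+2)) = Fin.castSucc (Fin.last k) := Fin.ext rfl
      have e2 : (⟨k+1, by omega⟩ : Fin (k+2)) = Fin.last (k+1) := Fin.ext rfl
      rw [e1, e2, hf.2.1] at h1
      exact h1
    · obtain ⟨g, hg⟩ := dwalk_prefix hf (Fin.castSucc (Fin.last k))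
      have hle := dist_le_of_dwalk hg
      intro hc
      rw [hc] at hle
      exact (WithTop.natCast_ne_top _) (top_le_iff.1 hle)

end Forest


open SimpleGraph

variable {V : Type*}

lemma reach_split {G : SimpleGraph V} {a b : V}
    (hbr : ¬ (G \ fromEdgeSet {s(a,b)}).Reachable a b) :
    ∀ x y : V, G.Reachable x y →
      (G \ fromEdgeSet {s(a,b)}).Reachable x y ∨
      ((G \ fromEdgeSet {s(a,b)}).Reachable x a ∧ (G \ fromEdgeSet {s(a,b)}).Reachable y b) ∨
      ((G \ fromEdgeSet {s(a,b)}).Reachable x b ∧ (G \ fromEdgeSet {s(a,b)}).Reachable y a) := by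
  set G' := G \ fromEdgeSet {s(a,b)} with hG'
  intro x y ⟨p⟩
  induction p with
  | nil => exact Or.inl (Reachable.refl _)
  | @cons x z y h p IH =>
    by_cases hxz : s(x, z) = s(a, b)
    · rw [Sym2.eq_iff] at hxz
      rcases hxz with ⟨rfl, rfl⟩ | ⟨rfl, rfl⟩
      · -- x = a, z = b
        rcases IH with hzy | ⟨hza, hyb⟩ | ⟨hzb, hya⟩
        · exact Or.inr (Or.inl ⟨Reachable.refl _, hzy.symm⟩)
        · exact absurd hza.symm hbr
        · exact Or.inl hya.symm
      · -- x = b, z = a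
        rcases IH with hzy | ⟨hza, hyb⟩ | ⟨hzb, hya⟩
        · exact Or.inr (Or.inr ⟨Reachable.refl _, hzy.symm⟩)
        · exact Or.inl hyb.symm
        · exact absurd hzb hbr
    · have hadj : G'.Adj x z := by
        rw [hG', sdiff_adj, fromEdgeSet_adj]
        exact ⟨h, fun hc => hxz hc.1⟩
      have hxz' : G'.Reachable x z := hadj.reachable
      rcases IH with hzy | ⟨hza, hyb⟩ | ⟨hzb, hya⟩
      · exact Or.inl (hxz'.trans hzy)
      · exact Or.inr (Or.inl ⟨hxz'.trans hza, hyb⟩)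
      · exact Or.inr (Or.inr ⟨hxz'.trans hzb, hya⟩)

lemma card_cc_deleteEdge [Fintype V] {G : SimpleGraph V} {a b : V} (hab : G.Adj a b)
    (hbr : G.IsBridge s(a,b)) :
    Nat.card (G \ fromEdgeSet {s(a,b)}).ConnectedComponent
      = Nat.card G.ConnectedComponent + 1 := by
  classical
  set G' := G \ fromEdgeSet {s(a,b)} with hG'
  have hle : G' ≤ G := sdiff_le
  have hnr : ¬ G'.Reachable a b := by
    rw [isBridge_iff] at hbr
    exact hbr
  haveI : Fintype G.ConnectedComponent := Fintype.ofFinite _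
  haveI : Fintype G'.ConnectedComponent := Fintype.ofFinite _
  set f : G'.ConnectedComponent → G.ConnectedComponent :=
    ConnectedComponent.map (SimpleGraph.Hom.ofLE hle) with hf
  have hfmk : ∀ x : V, f (G'.connectedComponentMk x) = G.connectedComponentMk x := fun x => rfl
  have hsplit := reach_split (G := G) (a := a) (b := b) hnr
  have hfiber : ∀ d : G.ConnectedComponent,
      (Finset.univ.filter fun c : G'.ConnectedComponent => f c = d).card
        = if d = G.connectedComponentMk a then 2 else 1 := by
    intro d
    obtain ⟨x, rfl⟩ := d.exists_rep
    rw [show (Quot.mk G.Reachable x : G.ConnectedComponent) = G.connectedComponentMk x from rfl]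
    by_cases hxa : G.connectedComponentMk x = G.connectedComponentMk a
    · rw [if_pos hxa]
      rw [ConnectedComponent.eq] at hxa
      have hset : (Finset.univ.filter fun c : G'.ConnectedComponent =>
          f c = G.connectedComponentMk x)
          = {G'.connectedComponentMk a, G'.connectedComponentMk b} := by
        ext c
        obtain ⟨y, rfl⟩ := c.exists_rep
        rw [show (Quot.mk G'.Reachable y : G'.ConnectedComponent) = G'.connectedComponentMk y
          from rfl]
        simp only [Finset.mem_filter, Finset.mem_univ, true_and, Finset.mem_insert,
          Finset.mem_singleton, hfmk, ConnectedComponent.eq]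
        constructor
        · intro hyx
          rcases hsplit y a (hyx.trans hxa) with h | ⟨h1, _⟩ | ⟨h1, _⟩
          · exact Or.inl h
          · exact Or.inl h1
          · exact Or.inr h1
        · rintro (h | h)
          · exact (h.mono hle).trans (hxa.symm)
          · exact ((h.mono hle).trans hab.reachable.symm).trans hxa.symm
      rw [hset]
      rw [Finset.card_insert_of_notMem (by
        simp only [Finset.mem_singleton, ConnectedComponent.eq]
        exact hnr), Finset.card_singleton]
    · rw [if_neg hxa]
      rw [ConnectedComponent.eq] at hxa
      have hset : (Finset.univ.filter fun c : G'.ConnectedComponent =>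
          f c = G.connectedComponentMk x) = {G'.connectedComponentMk x} := by
        ext c
        obtain ⟨y, rfl⟩ := c.exists_rep
        rw [show (Quot.mk G'.Reachable y : G'.ConnectedComponent) = G'.connectedComponentMk y
          from rfl]
        simp only [Finset.mem_filter, Finset.mem_univ, true_and, Finset.mem_singleton,
          hfmk, ConnectedComponent.eq]
        constructor
        · intro hyx
          rcases hsplit y x hyx with h | ⟨_, h2⟩ | ⟨_, h2⟩
          · exact h
          · exact absurd ((h2.mono hle).trans hab.reachable.symm) hxa
          · exact absurd (h2.mono hle) hxa
        · intro h
          exact h.mono hle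
      rw [hset, Finset.card_singleton]
  have hcard : Fintype.card G'.ConnectedComponent
      = ∑ d : G.ConnectedComponent,
        (Finset.univ.filter fun c : G'.ConnectedComponent => f c = d).card := by
    rw [← Finset.card_univ]
    exact Finset.card_eq_sum_card_fiberwise (fun c _ => Finset.mem_univ (f c))
  rw [Nat.card_eq_fintype_card, Nat.card_eq_fintype_card, hcard]
  rw [Finset.sum_congr rfl (fun d _ => hfiber d)]
  have : ∀ d : G.ConnectedComponent, (if d = G.connectedComponentMk a then 2 else 1)
      = 1 + (if d = G.connectedComponentMk a then 1 else 0) := by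
    intro d; split <;> rfl
  rw [Finset.sum_congr rfl (fun d _ => this d), Finset.sum_add_distrib,
    Finset.sum_const, Finset.sum_ite_eq' Finset.univ (G.connectedComponentMk a) (fun _ => 1),
    if_pos (Finset.mem_univ _)]
  simp [Finset.card_univ, add_comm]

lemma card_count [Fintype V] [DecidableEq V] :
    ∀ (N : ℕ) (R : V → V → Prop),
    (Finset.univ.filter fun p : V × V => R p.1 p.2).card = N →
    (∀ v, ¬ R v v) → (∀ u v, R u v → ¬ R v u) →
    (SimpleGraph.fromRel R).IsAcyclic →
    Fintype.card V = Nat.card (SimpleGraph.fromRel R).ConnectedComponent + N := by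
  intro N
  induction N using Nat.strong_induction_on with
  | _ N IH =>
    intro R hcard hirr hasymm hacyc
    rcases Nat.eq_zero_or_pos N with hN | hN
    · subst hN
      have hnone : ∀ u v : V, ¬ R u v := by
        intro u v hr
        have : (u, v) ∈ Finset.univ.filter fun p : V × V => R p.1 p.2 := by
          simp [hr]
        rw [Finset.card_eq_zero] at hcard
        rw [hcard] at this
        exact absurd this (Finset.notMem_empty _)
      have hbot : SimpleGraph.fromRel R = ⊥ := by
        ext x y
        simp only [fromRel_adj, bot_adj, iff_false, not_and]
        intro _
        rintro (h | h)
        · exact hnone _ _ h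
        · exact hnone _ _ h
      rw [hbot, add_zero]
      have hbij : Function.Bijective ((⊥ : SimpleGraph V).connectedComponentMk) := by
        constructor
        · intro x y hxy
          rw [ConnectedComponent.eq, reachable_bot] at hxy
          exact hxy
        · intro c
          obtain ⟨x, rfl⟩ := c.exists_rep
          exact ⟨x, rfl⟩
      rw [← Nat.card_eq_fintype_card]
      exact Nat.card_eq_of_bijective _ hbij
    · obtain ⟨⟨a, b⟩, hab⟩ : ∃ p : V × V,
          p ∈ Finset.univ.filter fun p : V × V => R p.1 p.2 := by
        apply Finset.card_pos.1
        rw [hcard]; omega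
      rw [Finset.mem_filter] at hab
      have hr : R a b := hab.2
      have hne : a ≠ b := fun hc => hirr a (hc ▸ hr)
      set R' : V → V → Prop := fun p q => R p q ∧ ¬(p = a ∧ q = b) with hR'
      have hirr' : ∀ v, ¬ R' v v := fun v hc => hirr v hc.1
      have hasymm' : ∀ u v, R' u v → ¬ R' v u := fun u v h1 h2 => hasymm u v h1.1 h2.1
      have hadj : (SimpleGraph.fromRel R).Adj a b := by
        rw [fromRel_adj]
        exact ⟨hne, Or.inl hr⟩
      have hbr : (SimpleGraph.fromRel R).IsBridge s(a, b) :=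
        (isAcyclic_iff_forall_adj_isBridge.1 hacyc) hadj
      have hG' : SimpleGraph.fromRel R' = SimpleGraph.fromRel R \ fromEdgeSet {s(a,b)} := by
        ext x y
        rw [fromRel_adj, sdiff_adj, fromRel_adj, fromEdgeSet_adj]
        simp only [Set.mem_singleton_iff, Sym2.eq_iff]
        constructor
        · rintro ⟨hxy, h | h⟩
          · refine ⟨⟨hxy, Or.inl h.1⟩, ?_⟩
            rintro ⟨(⟨rfl, rfl⟩ | ⟨rfl, rfl⟩), -⟩
            · exact h.2 ⟨rfl, rfl⟩
            · exact hasymm _ _ h.1 hr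
          · refine ⟨⟨hxy, Or.inr h.1⟩, ?_⟩
            rintro ⟨(⟨rfl, rfl⟩ | ⟨rfl, rfl⟩), -⟩
            · exact hasymm _ _ h.1 hr
            · exact h.2 ⟨rfl, rfl⟩
        · rintro ⟨⟨hxy, h | h⟩, hno⟩
          · refine ⟨hxy, Or.inl ⟨h, ?_⟩⟩
            rintro ⟨rfl, rfl⟩
            exact hno ⟨Or.inl ⟨rfl, rfl⟩, hxy⟩
          · refine ⟨hxy, Or.inr ⟨h, ?_⟩⟩
            rintro ⟨rfl, rfl⟩
            exact hno ⟨Or.inr ⟨rfl, rfl⟩, hxy⟩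
      have hacyc' : (SimpleGraph.fromRel R').IsAcyclic := by
        intro v c hc
        have hle : SimpleGraph.fromRel R' ≤ SimpleGraph.fromRel R := by
          rw [hG']; exact sdiff_le
        exact hacyc (c.mapLe hle) (hc.mapLe hle)
      have hcard' : (Finset.univ.filter fun p : V × V => R' p.1 p.2).card = N - 1 := by
        have hfe : (Finset.univ.filter fun p : V × V => R' p.1 p.2)
            = (Finset.univ.filter fun p : V × V => R p.1 p.2).erase (a, b) := by
          ext p
          simp only [Finset.mem_filter, Finset.mem_univ, true_and, Finset.mem_erase, hR']
          constructor
          · rintro ⟨h1, h2⟩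
            exact ⟨fun hc => h2 (by rw [hc]; exact ⟨rfl, rfl⟩), h1⟩
          · rintro ⟨h1, h2⟩
            exact ⟨h2, fun hc => h1 (Prod.ext hc.1 hc.2)⟩
        rw [hfe, Finset.card_erase_of_mem (by simp [hr]), hcard]
      have hIH := IH (N - 1) (by omega) R' (by convert hcard' using 2; exact Finset.filter_congr_decidable _ _ _) hirr' hasymm' hacyc'
      have hcc : Nat.card (SimpleGraph.fromRel R').ConnectedComponent
          = Nat.card (SimpleGraph.fromRel R).ConnectedComponent + 1 := by
        rw [hG']
        exact card_cc_deleteEdge hadj hbr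
      rw [hIH, hcc]
      omega

lemma sim_coe (t : ℝ) (n : ℕ) : sim t ((n : ℕ) : ℕ∞) = Real.exp (-t * n) := by
  rw [sim, if_neg (ENat.natCast_ne_top n)]
  norm_num

lemma sim_top (t : ℝ) : sim t ⊤ = 0 := by rw [sim, if_pos rfl]

end PolyForest

/-- A finite polyforest with `c` connected components, vertex set `V` and edge set `E`, has
Lawvere-metric magnitude `Mag(F,t) = c + |E|(1 - e^{-t})`, which equals `|V| - |E| e^{-t}`. -/
theorem polyforest_magnitude_components {V : Type*} [Fintype V] [DecidableEq V]
    (R : V → V → Prop)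
    (hirr : ∀ v, ¬ R v v) (hasymm : ∀ u v, R u v → ¬ R v u)
    (hforest : (SimpleGraph.fromRel R).IsAcyclic)
    (t : ℝ) (ht : 0 < t) :
    ∃ w : V → ℝ,
      (∀ u, ∑ v, sim t (lawvereDist R u v) * w v = 1) ∧
      ∑ v, w v = (Nat.card (SimpleGraph.fromRel R).ConnectedComponent : ℝ) +
        ((Finset.univ.filter fun p : V × V => R p.1 p.2).card : ℝ) * (1 - Real.exp (-t)) ∧
      (Nat.card (SimpleGraph.fromRel R).ConnectedComponent : ℝ) +
        ((Finset.univ.filter fun p : V × V => R p.1 p.2).card : ℝ) * (1 - Real.exp (-t)) =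
      (Fintype.card V : ℝ) -
        ((Finset.univ.filter fun p : V × V => R p.1 p.2).card : ℝ) * Real.exp (-t) := by
  classical
  have hcount : Fintype.card V
      = Nat.card (SimpleGraph.fromRel R).ConnectedComponent
        + (Finset.univ.filter fun p : V × V => R p.1 p.2).card :=
    PolyForest.card_count _ R rfl hirr hasymm hforest
  set q : ℝ := Real.exp (-t) with hq
  set od : V → ℕ := fun v => (Finset.univ.filter fun x => R v x).card with hod
  set wt : V → ℝ := fun v => 1 - q * (od v : ℝ) with hwt
  have hodsum : ∑ v, od v = (Finset.univ.filter fun p : V × V => R p.1 p.2).card := by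
    rw [Finset.card_filter, Fintype.sum_prod_type]
    exact Finset.sum_congr rfl fun v _ => Finset.card_filter _ _
  refine ⟨wt, ?_, ?_, ?_⟩
  · intro u
    set D : V → ℕ∞ := fun v => lawvereDist R u v with hD
    set Z : V → ℝ := fun v => sim t (D v) with hZ
    have hZu : Z u = 1 := by
      show sim t (lawvereDist R u u) = 1
      rw [PolyForest.lawvereDist_self, show ((0:ℕ∞)) = ((0:ℕ) : ℕ∞) from rfl,
        PolyForest.sim_coe]
      simp
    have hZtop : ∀ v, D v = ⊤ → Z v = 0 := by
      intro v hv
      show sim t (D v) = 0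
      rw [hv, PolyForest.sim_top]
    have hZstep : ∀ v x, R v x → D v ≠ ⊤ → Z x = Z v * q := by
      intro v x hr hv
      obtain ⟨n, hn⟩ := PolyForest.dist_ne_top_exists hv
      have hx : D x = ((n + 1 : ℕ) : ℕ∞) :=
        PolyForest.dist_step hirr hasymm hforest hn hr
      have hn' : D v = ((n : ℕ) : ℕ∞) := hn
      show sim t (D x) = sim t (D v) * q
      rw [hx, hn', PolyForest.sim_coe, PolyForest.sim_coe, hq, ← Real.exp_add]
      congr 1
      push_cast
      ring
    have h1 : ∀ v, Z v * wt v = Z v - Z v * q * (od v : ℝ) := by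
      intro v; rw [hwt]; ring
    rw [show (∑ v, sim t (lawvereDist R u v) * wt v) = ∑ v, Z v * wt v from rfl,
      Finset.sum_congr rfl fun v _ => h1 v, Finset.sum_sub_distrib]
    have h2 : ∀ v : V, Z v * q * (od v : ℝ) = ∑ x, if R v x then Z v * q else 0 := by
      intro v
      rw [← Finset.sum_filter, Finset.sum_const, nsmul_eq_mul, hod]
      ring
    set E : Finset (V × V) := Finset.univ.filter fun p : V × V => R p.1 p.2 with hE
    set E₁ : Finset (V × V) := E.filter fun p => D p.1 ≠ ⊤ with hE₁
    set A' : Finset V := Finset.univ.filter fun x => x ≠ u ∧ D x ≠ ⊤ with hA'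
    have h3 : ∑ v, Z v * q * (od v : ℝ) = ∑ p ∈ E, Z p.1 * q := by
      rw [hE, Finset.sum_filter, Fintype.sum_prod_type]
      exact Finset.sum_congr rfl fun v _ => h2 v
    have h4 : ∑ p ∈ E, Z p.1 * q = ∑ p ∈ E₁, Z p.1 * q := by
      refine (Finset.sum_subset (Finset.filter_subset _ _) ?_).symm
      intro p hp hp1
      have : D p.1 = ⊤ := by
        by_contra hc
        exact hp1 (Finset.mem_filter.2 ⟨hp, hc⟩)
      rw [hZtop _ this, zero_mul]
    have h5 : ∑ p ∈ E₁, Z p.1 * q = ∑ p ∈ E₁, Z p.2 := by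
      refine Finset.sum_congr rfl fun p hp => ?_
      rw [hE₁, Finset.mem_filter] at hp
      have hr : R p.1 p.2 := (Finset.mem_filter.1 hp.1).2
      exact (hZstep _ _ hr hp.2).symm
    have h6 : ∑ p ∈ E₁, Z p.2 = ∑ x ∈ A', Z x := by
      refine Finset.sum_bij (fun p _ => p.2) ?_ ?_ ?_ ?_
      · intro p hp
        rw [hE₁, Finset.mem_filter] at hp
        have hr : R p.1 p.2 := (Finset.mem_filter.1 hp.1).2
        obtain ⟨n, hn⟩ := PolyForest.dist_ne_top_exists hp.2
        have hx : D p.2 = ((n + 1 : ℕ) : ℕ∞) :=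
          PolyForest.dist_step hirr hasymm hforest hn hr
        rw [hA', Finset.mem_filter]
        refine ⟨Finset.mem_univ _, fun hc => ?_, ?_⟩
        · exact PolyForest.noback hirr hasymm hforest hp.2 (hc ▸ hr)
        · rw [hx]; exact WithTop.natCast_ne_top _
      · intro p₁ hp₁ p₂ hp₂ hpp
        rw [hE₁, Finset.mem_filter] at hp₁ hp₂
        have hr₁ : R p₁.1 p₁.2 := (Finset.mem_filter.1 hp₁.1).2
        have hr₂ : R p₂.1 p₂.2 := (Finset.mem_filter.1 hp₂.1).2
        have hpp' : p₁.2 = p₂.2 := hpp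
        rw [← hpp'] at hr₂
        have := PolyForest.parent_unique hirr hasymm hforest hr₁ hr₂ hp₁.2 hp₂.2
        exact Prod.ext this hpp' 
      · intro x hx
        rw [hA', Finset.mem_filter] at hx
        obtain ⟨k, hk⟩ := PolyForest.dist_ne_top_exists hx.2.2
        obtain ⟨v, hv, hvd⟩ :=
          PolyForest.parent_exists hirr hasymm hforest hx.2.1 hk
        refine ⟨(v, x), ?_, rfl⟩
        rw [hE₁, Finset.mem_filter, hE, Finset.mem_filter]
        exact ⟨⟨Finset.mem_univ _, hv⟩, hvd⟩
      · intro p hp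
        rfl
    have h7 : ∑ x ∈ A', Z x = (∑ x, Z x) - 1 := by
      have hsplit := Finset.sum_filter_add_sum_filter_not Finset.univ
        (fun x => x ≠ u ∧ D x ≠ ⊤) Z
      have h8 : ∑ x ∈ Finset.univ.filter (fun x => ¬(x ≠ u ∧ D x ≠ ⊤)), Z x = 1 := by
        have h9 : ∑ x ∈ Finset.univ.filter (fun x => ¬(x ≠ u ∧ D x ≠ ⊤)), Z x = Z u := by
          refine Finset.sum_eq_single_of_mem u (by simp) ?_
          intro x hx hxu
          rw [Finset.mem_filter] at hx
          refine hZtop x ?_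
          by_contra hc
          exact hx.2 ⟨hxu, hc⟩
        rw [h9, hZu]
      rw [hA']
      rw [← hsplit, h8]
      ring
    rw [h3, h4, h5, h6, h7]
    ring
  · have hsum : ∑ v, wt v = (Fintype.card V : ℝ)
        - q * ((Finset.univ.filter fun p : V × V => R p.1 p.2).card : ℝ) := by
      simp only [hwt]
      rw [Finset.sum_sub_distrib, Finset.sum_const, Finset.card_univ, nsmul_eq_mul, mul_one,
        ← Finset.mul_sum, ← Nat.cast_sum, hodsum]
    rw [hsum, hcount]
    push_cast
    ring
  · rw [hcount]
    push_cast
    ring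
end
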